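/- Reduction correctness for hardness of welfare maximization: given a collection C_1, ..., C_n of finite subsets of {1,...,m}, the constructed fair division instance with agents {1,...,n}, items {1,...,m+n} each in one unit, and demand of agent i being 100% of each item in C_i ∪ {m+i}, admits an allocation in which at least K agents receive their full demand if and only if the collection contains at least K mutually disjoint sets. -/

import Mathlib

open Finset
open scoped Classical

/-- Set packing reduction correctness: the fair division instance with items
Fin (m+n), where agent i demands all of each item in C i (embedded) plus its
private item m+i, admits an allocation satisfying at least K agents iff the
collection contains at least K mutually disjoint sets. -/
theorem set_packing_reduction (n m K : ℕ) (C : Fin n → Finset (Fin m)) :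
    (∃ x : Fin n → Fin (m + n) → ℝ,
        (∀ i j, 0 ≤ x i j) ∧
        (∀ j, ∑ i, x i j ≤ 1) ∧
        K ≤ (Finset.univ.filter fun i : Fin n =>
          ∀ j ∈ (C i).image (Fin.castAdd n) ∪ {Fin.natAdd m i}, x i j = 1).card) ↔
      (∃ S : Finset (Fin n),
        (∀ i ∈ S, ∀ k ∈ S, i ≠ k → Disjoint (C i) (C k)) ∧ K ≤ S.card) := by
  constructor
  · rintro ⟨x, hpos, hsum, hK⟩
    refine ⟨Finset.univ.filter fun i : Fin n =>
      ∀ j ∈ (C i).image (Fin.castAdd n) ∪ {Fin.natAdd m i}, x i j = 1, ?_, hK⟩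
    intro i hi k hk hik
    simp only [Finset.mem_filter] at hi hk
    rw [Finset.disjoint_left]
    intro a hai hak
    have h1 : x i (Fin.castAdd n a) = 1 := by
      apply hi.2
      simp only [Finset.mem_union, Finset.mem_image]
      exact Or.inl ⟨a, hai, rfl⟩
    have h2 : x k (Fin.castAdd n a) = 1 := by
      apply hk.2
      simp only [Finset.mem_union, Finset.mem_image]
      exact Or.inl ⟨a, hak, rfl⟩
    have hle : ∑ t ∈ ({i, k} : Finset (Fin n)), x t (Fin.castAdd n a)
        ≤ ∑ t, x t (Fin.castAdd n a) :=
      Finset.sum_le_sum_of_subset_of_nonneg (Finset.subset_univ _)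
        (fun t _ _ => hpos t _)
    rw [Finset.sum_pair hik, h1, h2] at hle
    have := hsum (Fin.castAdd n a)
    linarith
  · rintro ⟨S, hdisj, hK⟩
    refine ⟨fun i j => if i ∈ S ∧ j ∈ (C i).image (Fin.castAdd n) ∪ {Fin.natAdd m i}
      then 1 else 0, ?_, ?_, ?_⟩
    · intro i j; dsimp only; split <;> norm_num
    · intro j
      rw [Finset.sum_boole]
      rw [show (1 : ℝ) = ((1 : ℕ) : ℝ) by norm_num]
      rw [Nat.cast_le]
      rw [Finset.card_le_one]
      intro i hi k hk
      simp only [Finset.mem_filter, Finset.mem_union, Finset.mem_image,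
        Finset.mem_singleton] at hi hk
      obtain ⟨-, hiS, hij⟩ := hi
      obtain ⟨-, hkS, hkj⟩ := hk
      by_contra hik
      rcases hij with ⟨a, ha, haj⟩ | hij
      · rcases hkj with ⟨b, hb, hbj⟩ | hkj
        · have hab : a = b := by
            have : (a : ℕ) = (b : ℕ) := by
              have := haj.trans hbj.symm
              simpa [Fin.ext_iff] using this
            exact Fin.ext this
          subst hab
          exact (Finset.disjoint_left.mp (hdisj i hiS k hkS hik) ha) hb
        · have h : (a : ℕ) = m + (k : ℕ) := by
            have := haj.trans hkj
            simpa [Fin.ext_iff] using this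
          have := a.isLt
          omega
      · rcases hkj with ⟨b, hb, hbj⟩ | hkj
        · have h : (b : ℕ) = m + (i : ℕ) := by
            have := hbj.trans hij
            simpa [Fin.ext_iff] using this
          have := b.isLt
          omega
        · have : (i : ℕ) = (k : ℕ) := by
            have := hij.symm.trans hkj
            simpa [Fin.ext_iff] using this
          exact hik (Fin.ext this)
    · refine le_trans hK (Finset.card_le_card ?_)
      intro i hi
      simp only [Finset.mem_filter, Finset.mem_univ, true_and]
      intro j hj
      exact if_pos ⟨hi, hj⟩
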